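/- Let δ, ε > 0 and let J^μ be a weighted graph such that s(K2; J^μ) ≤ δ and μ({u : uv ∈ E(J)}) ≤ ε for every vertex v ∈ V(J). Let Z = (z1, …, zr) be r vertices of J chosen independently at random according to μ. Then for every integer ℓ ≥ 1, the probability that the subgraph of J induced by the chosen vertices contains a subgraph isomorphic to the complete bipartite graph K_{ℓ,ℓ} is at most 3^r · δ^ℓ. -/

import Mathlib

open Finset
open scoped Classical

def IsStrongHom {α β : Type} (H : SimpleGraph α) (G : SimpleGraph β) (φ : α → β) : Prop :=
  ∀ u v : α, H.Adj u v ↔ G.Adj (φ u) (φ v)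

def SimpleGraph.blowup {α : Type} (H : SimpleGraph α) (k : α → ℕ) :
    SimpleGraph (Σ v : α, Fin (k v)) where
  Adj x y := H.Adj x.1 y.1
  symm := ⟨fun _ _ h => H.symm.symm _ _ h⟩
  loopless := ⟨fun x h => H.loopless.irrefl x.1 h⟩

def IsWeight {β : Type} [Fintype β] (μ : β → ℝ) : Prop :=
  (∀ v, 0 < μ v) ∧ ∑ v, μ v = 1

noncomputable def sdensity {α β : Type} [Fintype α] [Fintype β]
    (H : SimpleGraph α) (G : SimpleGraph β) (μ : β → ℝ) : ℝ :=
  ∑ ψ : α → β, if IsStrongHom H G ψ then ∏ v : α, μ (ψ v) else 0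

def IsTwinFree {α : Type} (G : SimpleGraph α) : Prop :=
  ∀ u v : α, (∀ w, G.Adj u w ↔ G.Adj v w) → u = v

def WEquiv {α β : Type} [Fintype α] [Fintype β]
    (G1 : SimpleGraph α) (μ1 : α → ℝ) (G2 : SimpleGraph β) (μ2 : β → ℝ) : Prop :=
  ∃ (m : ℕ) (T : SimpleGraph (Fin m)) (π1 : α → Fin m) (π2 : β → Fin m),
    IsTwinFree T ∧ IsStrongHom G1 T π1 ∧ IsStrongHom G2 T π2 ∧
    Function.Surjective π1 ∧ Function.Surjective π2 ∧
    ∀ t : Fin m,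
      (∑ u ∈ Finset.univ.filter (fun u => π1 u = t), μ1 u) =
        ∑ u ∈ Finset.univ.filter (fun u => π2 u = t), μ2 u

noncomputable def d1dist {α β : Type} [Fintype α] [Fintype β]
    (G1 : SimpleGraph α) (μ1 : α → ℝ) (G2 : SimpleGraph β) (μ2 : β → ℝ) : ℝ :=
  sInf {x : ℝ | ∃ (m : ℕ) (F1 F2 : SimpleGraph (Fin m)) (μ : Fin m → ℝ),
    IsWeight μ ∧ WEquiv F1 μ G1 μ1 ∧ WEquiv F2 μ G2 μ2 ∧
    x = ∑ u : Fin m, ∑ v : Fin m, μ u * μ v *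
      |(if F1.Adj u v then (1:ℝ) else 0) - (if F2.Adj u v then (1:ℝ) else 0)|}

noncomputable def sdensityP {α β : Type} [Fintype α] [Fintype β]
    (H : SimpleGraph α) (u0 : α) (G : SimpleGraph β) (v0 : β) (μ : β → ℝ) : ℝ :=
  ∑ ψ : α → β, if ψ u0 = v0 ∧ IsStrongHom H G ψ
    then ∏ v ∈ Finset.univ.erase u0, μ (ψ v) else 0

def GraphBalanced {α : Type} [Fintype α] (H : SimpleGraph α) : Prop :=
  ∃ (m : ℕ) (Ht : SimpleGraph (Fin m)) (k : Fin m → ℕ),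
    (∀ v, 0 < k v) ∧ IsTwinFree Ht ∧ Nonempty (H ≃g Ht.blowup k) ∧
    ∀ σ : Ht ≃g Ht, ∀ v, k (σ v) = k v



lemma sum_fun_prod {β ι : Type} [Fintype β] [Fintype ι] (g : ι → β → ℝ) :
    ∑ f : ι → β, ∏ i, g i (f i) = ∏ i, ∑ x, g i x := by
  rw [Finset.prod_univ_sum, Fintype.piFinset_univ]


lemma sum_univ_inst {α : Type} {F1 : Fintype α} (F2 : Fintype α) (f : α → ℝ) :
    (@Finset.univ α F1).sum f = (@Finset.univ α F2).sum f :=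
  congrArg (fun i => (@Finset.univ α i).sum f) (Subsingleton.elim F1 F2)


lemma ite_inst {P : Prop} (i j : Decidable P) (a b : ℝ) :
    @ite ℝ P i a b = @ite ℝ P j a b :=
  congrArg (fun d => @ite ℝ P d a b) (Subsingleton.elim i j)


lemma sum_ite_inst {α : Type} {F1 : Fintype α} (F2 : Fintype α)
    {P : α → Prop} (i1 : ∀ a, Decidable (P a)) (i2 : ∀ a, Decidable (P a)) (f : α → ℝ) :
    (@Finset.univ α F1).sum (fun a => @ite ℝ (P a) (i1 a) (f a) 0)
      = (@Finset.univ α F2).sum (fun a => @ite ℝ (P a) (i2 a) (f a) 0) := by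
  refine (sum_univ_inst F2 _).trans ?_
  exact Finset.sum_congr rfl fun a _ => ite_inst _ _ _ _


lemma sum_comp_inj {β : Type} [Fintype β] (μ : β → ℝ) (hsum : ∑ v, μ v = 1)
    {r : ℕ} {κ : Type} [Fintype κ] (w : κ → Fin r) (hw : Function.Injective w)
    (P : (κ → β) → Prop) :
    ∑ z : Fin r → β, (if P (fun k => z (w k)) then ∏ i, μ (z i) else 0)
      = ∑ y : κ → β, (if P y then ∏ k, μ (y k) else 0) := by
  set C := ((Set.range w)ᶜ : Set (Fin r))
  let e : (κ ⊕ C) ≃ Fin r :=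
    (Equiv.sumCongr (Equiv.ofInjective w hw) (Equiv.refl C)).trans
      (Equiv.Set.sumCompl (Set.range w))
  have hel : ∀ k, e (Sum.inl k) = w k := by
    intro k; simp [e, Equiv.Set.sumCompl]; rfl
  let E : ((κ ⊕ C) → β) ≃ (Fin r → β) := Equiv.arrowCongr e (Equiv.refl β)
  rw [← Equiv.sum_comp E (fun z => if P (fun k => z (w k)) then ∏ i, μ (z i) else 0)]
  have hE : ∀ (y : (κ ⊕ C) → β) (i : Fin r), E y i = y (e.symm i) := by
    intro y i; rfl
  have h1 : ∀ (y : (κ ⊕ C) → β) (k : κ), E y (w k) = y (Sum.inl k) := by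
    intro y k; rw [hE]; congr 1; rw [Equiv.symm_apply_eq]; exact (hel k).symm
  have h2 : ∀ y : (κ ⊕ C) → β, ∏ i, μ (E y i) = (∏ k, μ (y (Sum.inl k))) * ∏ c, μ (y (Sum.inr c)) := by
    intro y
    have := Equiv.prod_comp e.symm (fun j => μ (y j))
    rw [show (∏ i, μ (E y i)) = ∏ i, μ (y (e.symm i)) from rfl, this,
      Fintype.prod_sum_type]
  have step : ∀ y : (κ ⊕ C) → β,
      (if P (fun k => E y (w k)) then ∏ i, μ (E y i) else 0)
        = (if P (fun k => y (Sum.inl k)) then ∏ k, μ (y (Sum.inl k)) else 0) * ∏ c, μ (y (Sum.inr c)) := by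
    intro y
    simp only [fun k => h1 y k, h2 y]
    split_ifs <;> ring
  simp only [step]
  let E2 : ((κ ⊕ C) → β) ≃ ((κ → β) × (C → β)) := Equiv.sumArrowEquivProdArrow κ C β
  rw [← Equiv.sum_comp E2.symm (fun y => (if P (fun k => y (Sum.inl k)) then ∏ k, μ (y (Sum.inl k)) else 0) * ∏ c, μ (y (Sum.inr c)))]
  have hE2 : ∀ (p : (κ → β) × (C → β)),
      (∀ k, E2.symm p (Sum.inl k) = p.1 k) ∧ ∀ c, E2.symm p (Sum.inr c) = p.2 c := by
    intro p; constructor <;> intro x <;> rfl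
  have : ∀ p : (κ → β) × (C → β),
      (if P (fun k => E2.symm p (Sum.inl k)) then ∏ k, μ (E2.symm p (Sum.inl k)) else 0) * ∏ c, μ (E2.symm p (Sum.inr c))
      = (if P p.1 then ∏ k, μ (p.1 k) else 0) * ∏ c, μ (p.2 c) := by
    intro p
    simp only [(hE2 p).1, (hE2 p).2]
  simp only [this]
  have hC : ∑ g : C → β, ∏ c, μ (g c) = 1 := by
    have h := sum_fun_prod (ι := C) (fun _ (x : β) => μ x)
    simp only [hsum, Finset.prod_const_one] at h
    convert h using 2
    exact congrArg (fun i => @Finset.univ _ i) (Subsingleton.elim _ _)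
  rw [Fintype.sum_prod_type]
  dsimp only
  refine Finset.sum_congr rfl fun x _ => ?_
  calc _ = ∑ y : C → β, (if P x then ∏ k, μ (x k) else 0) * ∏ c, μ (y c) := rfl
    _ = _ := by rw [← Finset.mul_sum, hC, mul_one]

lemma matching_sum {β : Type} [Fintype β] (J : SimpleGraph β) (μ : β → ℝ) (ℓ : ℕ) :
    ∑ y : (Fin ℓ ⊕ Fin ℓ) → β,
      (if (∀ k, J.Adj (y (Sum.inl k)) (y (Sum.inr k))) then ∏ j, μ (y j) else 0)
    = (∑ p : β × β, if J.Adj p.1 p.2 then μ p.1 * μ p.2 else 0) ^ ℓ := by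
  let E : ((Fin ℓ ⊕ Fin ℓ) → β) ≃ (Fin ℓ → β × β) :=
    (Equiv.sumArrowEquivProdArrow _ _ _).trans (Equiv.arrowProdEquivProdArrow (Fin ℓ) (fun _ => β) (fun _ => β)).symm
  rw [← Equiv.sum_comp E.symm (fun y => if (∀ k, J.Adj (y (Sum.inl k)) (y (Sum.inr k))) then ∏ j, μ (y j) else 0)]
  have h1 : ∀ (g : Fin ℓ → β × β) (k : Fin ℓ), E.symm g (Sum.inl k) = (g k).1 := fun g k => rfl
  have h2 : ∀ (g : Fin ℓ → β × β) (k : Fin ℓ), E.symm g (Sum.inr k) = (g k).2 := fun g k => rfl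
  have key : ∀ g : Fin ℓ → β × β,
      (if (∀ k, J.Adj (E.symm g (Sum.inl k)) (E.symm g (Sum.inr k))) then ∏ j, μ (E.symm g j) else 0)
      = ∏ k, (if J.Adj (g k).1 (g k).2 then μ (g k).1 * μ (g k).2 else 0) := by
    intro g
    simp only [h1, h2]
    have hp : ∏ j, μ (E.symm g j) = ∏ k, (μ (g k).1 * μ (g k).2) := by
      rw [Fintype.prod_sum_type]
      simp only [h1, h2, ← Finset.prod_mul_distrib]
    by_cases h : ∀ k, J.Adj (g k).1 (g k).2
    · rw [if_pos h, hp]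
      exact Finset.prod_congr rfl fun k _ => (if_pos (h k)).symm
    · rw [if_neg h]
      push_neg at h
      obtain ⟨k, hk⟩ := h
      refine (Finset.prod_eq_zero (Finset.mem_univ k) ?_).symm
      rw [if_neg hk]
  simp only [key]
  have h3 := sum_fun_prod (fun (_ : Fin ℓ) (p : β × β) =>
      if J.Adj p.1 p.2 then μ p.1 * μ p.2 else 0)
  rw [Finset.prod_const, Finset.card_univ, Fintype.card_fin] at h3
  convert h3 using 2
  exact congrArg (fun i => @Finset.univ _ i) (Subsingleton.elim _ _)


lemma sdensity_two {β : Type} [Fintype β] (J : SimpleGraph β) (μ : β → ℝ) :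
    sdensity (SimpleGraph.completeGraph (Fin 2)) J μ
      = ∑ p : β × β, if J.Adj p.1 p.2 then μ p.1 * μ p.2 else 0 := by
  unfold sdensity
  refine (sum_univ_inst inferInstance _).trans ?_
  apply Fintype.sum_equiv (piFinTwoEquiv (fun _ => β))
  intro ψ
  have hhom : IsStrongHom (SimpleGraph.completeGraph (Fin 2)) J ψ ↔ J.Adj (ψ 0) (ψ 1) := by
    simp only [IsStrongHom]
    constructor
    · intro h
      exact (h 0 1).mp (by simp [SimpleGraph.completeGraph])
    · intro h u v
      fin_cases u <;> fin_cases v <;>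
        simp [SimpleGraph.completeGraph, h, h.symm, SimpleGraph.irrefl]
  rw [Fin.prod_univ_two]
  simp only [hhom, piFinTwoEquiv]
  rfl


theorem stmt4 {β : Type} [Fintype β] (J : SimpleGraph β) (μ : β → ℝ) (hμ : IsWeight μ)
    (δ ε : ℝ) (hδ : 0 < δ) (hε : 0 < ε)
    (hedge : sdensity (SimpleGraph.completeGraph (Fin 2)) J μ ≤ δ)
    (hdeg : ∀ v : β, ∑ u ∈ Finset.univ.filter (fun u => J.Adj v u), μ u ≤ ε)
    (r ℓ : ℕ) (hℓ : 1 ≤ ℓ) :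
    ∑ z : Fin r → β,
      (if ∃ A B : Finset (Fin r), Disjoint A B ∧ A.card = ℓ ∧ B.card = ℓ ∧
            ∀ i ∈ A, ∀ j ∈ B, J.Adj (z i) (z j)
        then ∏ i : Fin r, μ (z i) else 0) ≤ 3 ^ r * δ ^ ℓ := by
  have hμpos := hμ.1
  have hμsum := hμ.2
  set S2 : ℝ := ∑ p : β × β, if J.Adj p.1 p.2 then μ p.1 * μ p.2 else 0 with hS2def
  have hS2nonneg : 0 ≤ S2 := Finset.sum_nonneg fun p _ => by
    split_ifs
    · exact mul_nonneg (hμpos p.1).le (hμpos p.2).le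
    · exact le_refl 0
  have hS2le : S2 ≤ δ := by rw [hS2def, ← sdensity_two J μ]; exact hedge
  have hμprod : ∀ z : Fin r → β, 0 ≤ ∏ i, μ (z i) :=
    fun z => Finset.prod_nonneg fun i _ => (hμpos _).le
  set S : Finset (Finset (Fin r) × Finset (Fin r)) :=
    Finset.univ.filter (fun AB => Disjoint AB.1 AB.2 ∧ AB.1.card = ℓ ∧ AB.2.card = ℓ) with hSdef
  have hnn : ∀ (P : Prop) (inst : Decidable P) (z : Fin r → β),
      0 ≤ @ite ℝ P inst (∏ i, μ (z i)) 0 := by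
    intro P inst z
    split_ifs
    · exact hμprod z
    · exact le_refl 0
  -- Step 1: union bound, pointwise
  have step1 : ∀ z : Fin r → β,
      (if ∃ A B : Finset (Fin r), Disjoint A B ∧ A.card = ℓ ∧ B.card = ℓ ∧
            ∀ i ∈ A, ∀ j ∈ B, J.Adj (z i) (z j) then ∏ i, μ (z i) else 0)
      ≤ ∑ AB ∈ S, (if ∀ i ∈ AB.1, ∀ j ∈ AB.2, J.Adj (z i) (z j)
          then ∏ i, μ (z i) else 0) := by
    intro z
    split_ifs with h
    · obtain ⟨A, B, hd, hA, hB, hadj⟩ := h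
      have hmem : (A, B) ∈ S := by
        simp only [hSdef, Finset.mem_filter, Finset.mem_univ, true_and]
        exact ⟨hd, hA, hB⟩
      have := Finset.single_le_sum
        (f := fun AB : Finset (Fin r) × Finset (Fin r) =>
          if ∀ i ∈ AB.1, ∀ j ∈ AB.2, J.Adj (z i) (z j) then ∏ i, μ (z i) else 0)
        (fun AB _ => hnn _ _ z) hmem
      simpa [if_pos hadj] using this
    · exact Finset.sum_nonneg fun AB _ => hnn _ _ z
  -- Step 2: per-pair bound
  have step2 : ∀ AB ∈ S,
      (∑ z : Fin r → β, if ∀ i ∈ AB.1, ∀ j ∈ AB.2, J.Adj (z i) (z j)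
          then ∏ i, μ (z i) else 0) ≤ δ ^ ℓ := by
    intro AB hmem
    rw [hSdef, Finset.mem_filter] at hmem
    obtain ⟨-, hd, hA, hB⟩ := hmem
    set a : Fin ℓ → Fin r := fun k => ((AB.1.orderIsoOfFin hA k : AB.1) : Fin r) with hadef
    set b : Fin ℓ → Fin r := fun k => ((AB.2.orderIsoOfFin hB k : AB.2) : Fin r) with hbdef
    have ha : ∀ k, a k ∈ AB.1 := fun k => (AB.1.orderIsoOfFin hA k).2
    have hb : ∀ k, b k ∈ AB.2 := fun k => (AB.2.orderIsoOfFin hB k).2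
    have hainj : Function.Injective a := fun j k h =>
      (AB.1.orderIsoOfFin hA).injective (Subtype.coe_injective h)
    have hbinj : Function.Injective b := fun j k h =>
      (AB.2.orderIsoOfFin hB).injective (Subtype.coe_injective h)
    set w : (Fin ℓ ⊕ Fin ℓ) → Fin r := Sum.elim a b with hwdef
    have hw : Function.Injective w := by
      intro x y hxy
      cases x with
      | inl j =>
        cases y with
        | inl k => exact congrArg Sum.inl (hainj hxy)
        | inr k =>
          exact absurd (show a j ∈ AB.2 by rw [show a j = b k from hxy]; exact hb k)
            (Finset.disjoint_left.mp hd (ha j))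
      | inr j =>
        cases y with
        | inl k =>
          exact absurd (show a k ∈ AB.2 by rw [show a k = b j from hxy.symm]; exact hb j)
            (Finset.disjoint_left.mp hd (ha k))
        | inr k => exact congrArg Sum.inr (hbinj hxy)
    have e1 := sum_comp_inj μ hμsum w hw
      (fun y => ∀ k : Fin ℓ, J.Adj (y (Sum.inl k)) (y (Sum.inr k)))
    have e2 := matching_sum J μ ℓ
    calc (∑ z : Fin r → β, if ∀ i ∈ AB.1, ∀ j ∈ AB.2, J.Adj (z i) (z j)
            then ∏ i, μ (z i) else 0)
        ≤ ∑ z : Fin r → β, (if ∀ k : Fin ℓ, J.Adj (z (w (Sum.inl k))) (z (w (Sum.inr k)))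
            then ∏ i, μ (z i) else 0) := by
          refine Finset.sum_le_sum fun z _ => ?_
          split_ifs with h1 h2
          · exact le_refl _
          · exact absurd (fun k => h1 (a k) (ha k) (b k) (hb k)) h2
          · exact hμprod z
          · exact le_refl 0
      _ = S2 ^ ℓ := by
          have t1 := e1.trans ((sum_ite_inst _ _ _ _).trans e2)
          exact (sum_ite_inst _ _ _ _).trans t1
      _ ≤ δ ^ ℓ := pow_le_pow_left₀ hS2nonneg hS2le ℓ
  -- Counting
  have hcard : (S.card : ℝ) ≤ 3 ^ r := by
    set φ : Finset (Fin r) × Finset (Fin r) → (Fin r → Fin 3) :=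
      fun AB i => if i ∈ AB.1 then 0 else if i ∈ AB.2 then 1 else 2 with hφdef
    have hmemiff : ∀ AB : Finset (Fin r) × Finset (Fin r), Disjoint AB.1 AB.2 → ∀ i,
        (i ∈ AB.1 ↔ φ AB i = 0) ∧ (i ∈ AB.2 ↔ φ AB i = 1) := by
      intro AB hAB i
      by_cases h1 : i ∈ AB.1 <;> by_cases h2 : i ∈ AB.2
      · exact absurd h2 (Finset.disjoint_left.mp hAB h1)
      · simp [hφdef, h1, h2]
      · simp [hφdef, h1, h2]
      · simp [hφdef, h1, h2]
    have hinj : Set.InjOn φ S := by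
      intro p hp q hq hpq
      rw [Finset.mem_coe, hSdef, Finset.mem_filter] at hp hq
      have ext1 : p.1 = q.1 := by
        ext i
        rw [(hmemiff p hp.2.1 i).1, (hmemiff q hq.2.1 i).1, hpq]
      have ext2 : p.2 = q.2 := by
        ext i
        rw [(hmemiff p hp.2.1 i).2, (hmemiff q hq.2.1 i).2, hpq]
      exact Prod.ext ext1 ext2
    have hle : S.card ≤ 3 ^ r := by
      have h := Finset.card_le_card_of_injOn φ (fun x _ => Finset.mem_univ (φ x)) hinj
      simpa [Finset.card_univ] using h
    exact_mod_cast hle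
  calc (∑ z : Fin r → β,
      if ∃ A B : Finset (Fin r), Disjoint A B ∧ A.card = ℓ ∧ B.card = ℓ ∧
            ∀ i ∈ A, ∀ j ∈ B, J.Adj (z i) (z j)
        then ∏ i, μ (z i) else 0)
      ≤ ∑ z : Fin r → β, ∑ AB ∈ S, (if ∀ i ∈ AB.1, ∀ j ∈ AB.2, J.Adj (z i) (z j)
          then ∏ i, μ (z i) else 0) := Finset.sum_le_sum fun z _ => step1 z
    _ = ∑ AB ∈ S, ∑ z : Fin r → β, (if ∀ i ∈ AB.1, ∀ j ∈ AB.2, J.Adj (z i) (z j)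
          then ∏ i, μ (z i) else 0) := Finset.sum_comm
    _ ≤ ∑ AB ∈ S, δ ^ ℓ := Finset.sum_le_sum step2
    _ = S.card * δ ^ ℓ := by rw [Finset.sum_const, nsmul_eq_mul]
    _ ≤ 3 ^ r * δ ^ ℓ := mul_le_mul_of_nonneg_right hcard (pow_nonneg hδ.le ℓ)
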